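/- Let R be a commutative ring and f ∈ R((t)) with f = 1 + f' where every coefficient of f' is nilpotent in R. Then f is invertible in R((t)). -/

import Mathlib

open HahnSeries

lemma nilp_of_finite_support (R : Type*) [CommRing R] (s : Finset ℤ)
    (g : LaurentSeries R) (hs : g.support ⊆ ↑s)
    (h : ∀ n : ℤ, IsNilpotent (g.coeff n)) : IsNilpotent g := by
  induction s using Finset.induction generalizing g with
  | empty =>
    have : g = 0 := support_eq_empty_iff.mp (Set.subset_empty_iff.mp (by simpa using hs))
    simp [this]
  | @insert a t ha ih =>
    set g' := g - single a (g.coeff a) with hg'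
    have hc : ∀ n, g'.coeff n = if n = a then 0 else g.coeff n := by
      intro n
      by_cases hn : n = a <;> simp [hg', hn, coeff_single_of_ne, coeff_sub]
    have h1 : IsNilpotent g' := by
      apply ih
      · intro n hn
        have hna : n ≠ a := fun e => by simp [hc, e] at hn
        have := hs (by simpa [HahnSeries.mem_support, hc, hna] using hn)
        simp at this
        tauto
      · intro n; rw [hc]; split
        · exact IsNilpotent.zero
        · exact h n
    have h2 : IsNilpotent (single a (g.coeff a) : LaurentSeries R) := by
      obtain ⟨k, hk⟩ := h a
      exact ⟨k, by rw [single_pow, hk, single_eq_zero]⟩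
    have : g = g' + single a (g.coeff a) := by ring
    rw [this]
    exact (Commute.all _ _).isNilpotent_add h1 h2

theorem isUnit_one_add_of_forall_coeff_nilpotent
    (R : Type*) [CommRing R] (f' : LaurentSeries R)
    (h : ∀ n : ℤ, IsNilpotent (f'.coeff n)) :
    IsUnit (1 + f') := by
  set p : PowerSeries R := PowerSeries.mk (fun n => f'.coeff n) with hp
  set hh : LaurentSeries R := HahnSeries.ofPowerSeries ℤ R p with hhh
  have hcoe : ∀ n : ℤ, hh.coeff n = if 0 ≤ n then f'.coeff n else 0 := by
    intro n
    rcases le_or_gt 0 n with hn | hn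
    · lift n to ℕ using hn
      simp [hhh, hp, ofPowerSeries_apply_coeff]
    · rw [if_neg (not_le.mpr hn), hhh, ofPowerSeries_apply, embDomain_notin_range]
      rintro ⟨m, hm⟩
      simp at hm
      omega
  set g : LaurentSeries R := f' - hh with hg
  have hgnil : IsNilpotent g := by
    apply nilp_of_finite_support R (Finset.Ico f'.order 0)
    · intro n hn
      simp only [Finset.coe_Ico, Set.mem_Ico]
      simp only [HahnSeries.mem_support, hg, coeff_sub, hcoe] at hn
      rcases le_or_gt 0 n with hn0 | hn0
      · simp [hn0] at hn
      refine ⟨?_, hn0⟩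
      by_contra hlt
      push_neg at hlt
      exact hn (by simp [coeff_eq_zero_of_lt_order hlt, if_neg (not_le.mpr hn0)])
    · intro n
      rw [hg, coeff_sub, hcoe]
      split
      · simp
      · simpa using h n
  have hu : IsUnit (1 + hh) := by
    have hup : IsUnit (1 + p) := by
      rw [PowerSeries.isUnit_iff_constantCoeff]
      have : (PowerSeries.constantCoeff (R := R)) (1 + p) = 1 + f'.coeff 0 := by
        simp [hp]
      rw [this]
      exact (h 0).isUnit_one_add
    have := hup.map (HahnSeries.ofPowerSeries ℤ R)
    simpa [hhh] using this
  have heq : 1 + f' = (1 + hh) + g := by rw [hg]; ring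
  rw [heq, add_comm]
  exact hgnil.isUnit_add_right_of_commute hu (Commute.all _ _)
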